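/- Define U(p) = E_γ[ Σ_{α∈A} γ_α(x^γ_α) ] where x^γ = argmax_x { θ(x) + Σ_{α∈A} γ_α(x_α) }. Then U ≥ 0, U equals 0 when the perturb-max model is deterministic (θ taking value -∞ outside a single configuration), and U is maximized over all potentials θ by constant potentials, i.e., U(p_uniform) ≥ U(p) for the perturb-max model p induced by any θ. -/

import Mathlib

open MeasureTheory Real Set Filter Asymptotics
open scoped ENNReal NNReal

/-- Density of the zero-mean Gumbel distribution, whose CDF is `exp (-exp (-(t + c)))`. -/
noncomputable def gumbelPDF (t : ℝ) : ℝ :=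
  Real.exp (-(t + Real.eulerMascheroniConstant)) *
    Real.exp (-Real.exp (-(t + Real.eulerMascheroniConstant)))

/-- The zero-mean Gumbel measure on `ℝ`. -/
noncomputable def gumbel : Measure ℝ :=
  MeasureTheory.volume.withDensity fun t => ENNReal.ofReal (gumbelPDF t)


lemma aux_mellin :
    MellinConvergent (fun t : ℝ => Real.log t • ((Real.exp (-t) : ℝ) : ℂ)) 1 ∧
      HasDerivAt Complex.GammaIntegral
        (mellin (fun t : ℝ => Real.log t • ((Real.exp (-t) : ℝ) : ℂ)) 1) 1 := by
  rw [Complex.GammaIntegral_eq_mellin]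
  refine mellin_hasDerivAt_of_isBigO_rpow (a := 2) (b := 0) ?_ ?_ ?_ ?_ ?_
  · refine (Continuous.continuousOn ?_).locallyIntegrableOn measurableSet_Ioi
    exact Complex.continuous_ofReal.comp (Real.continuous_exp.comp continuous_neg)
  · rw [← isBigO_norm_left]
    simp_rw [Complex.norm_real, isBigO_norm_left]
    simpa only [neg_one_mul] using (isLittleO_exp_neg_mul_rpow_atTop zero_lt_one _).isBigO
  · norm_num
  · simp_rw [neg_zero, rpow_zero]
    refine isBigO_const_of_tendsto (?_ : Tendsto _ _ (nhds (1 : ℂ))) one_ne_zero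
    rw [(by simp : (1 : ℂ) = Real.exp (-0))]
    exact (Complex.continuous_ofReal.comp
      (Real.continuous_exp.comp continuous_neg)).continuousWithinAt
  · norm_num

lemma log_mul_exp_integrableOn :
    IntegrableOn (fun t : ℝ => Real.log t * Real.exp (-t)) (Ioi 0) := by
  have h := aux_mellin.1
  unfold MellinConvergent at h
  simp only [Complex.cpow_zero, one_smul, sub_self] at h
  have hmeas : Measurable fun t : ℝ => Real.log t * Real.exp (-t) :=
    Real.measurable_log.mul (Real.continuous_exp.comp continuous_neg).measurable
  refine ⟨hmeas.aestronglyMeasurable, ?_⟩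
  have := h.2
  simp only [HasFiniteIntegral] at this ⊢
  refine lt_of_eq_of_lt ?_ this
  refine lintegral_congr fun t => ?_
  rw [Complex.real_smul, ← Complex.ofReal_mul]
  simp [nnnorm, ← Complex.ofReal_exp, enorm_eq_nnnorm, Complex.nnnorm_real, abs_of_pos (Real.exp_pos _)]

lemma integral_log_mul_exp :
    ∫ t : ℝ in Ioi 0, Real.log t * Real.exp (-t) = -Real.eulerMascheroniConstant := by
  have h2 := aux_mellin.2
  have h3 : HasDerivAt Complex.GammaIntegral (-Real.eulerMascheroniConstant) 1 := by
    have hopen : IsOpen {z : ℂ | 0 < z.re} := isOpen_lt continuous_const Complex.continuous_re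
    have hev : Complex.GammaIntegral =ᶠ[nhds (1 : ℂ)] Complex.Gamma := by
      filter_upwards [hopen.mem_nhds (by norm_num : (0:ℝ) < (1:ℂ).re)] with z hz
      exact (Complex.Gamma_eq_integral hz).symm
    exact Complex.hasDerivAt_Gamma_one.congr_of_eventuallyEq hev
  have := h2.unique h3
  rw [mellin] at this
  simp only [sub_self, Complex.cpow_zero, one_smul] at this
  have heq : (fun t : ℝ => Real.log t • ((Real.exp (-t) : ℝ) : ℂ))
      = fun t : ℝ => ((Real.log t * Real.exp (-t) : ℝ) : ℂ) := by
    funext t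
    rw [Complex.real_smul, ← Complex.ofReal_mul]
  have h5 : (((∫ t : ℝ in Ioi 0, Real.log t * Real.exp (-t)) : ℝ) : ℂ)
      = ∫ t : ℝ in Ioi 0, ((Real.log t * Real.exp (-t) : ℝ) : ℂ) := integral_ofReal.symm
  rw [heq, ← h5] at this
  exact_mod_cast this

lemma gumbelPDF_nonneg (t : ℝ) : 0 ≤ gumbelPDF t := by
  unfold gumbelPDF; positivity

lemma continuous_gumbelPDF : Continuous gumbelPDF := by
  unfold gumbelPDF; fun_prop

noncomputable def gumbelInv (u : ℝ) : ℝ := -Real.log u - Real.eulerMascheroniConstant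

lemma gumbelInv_hasDeriv : ∀ u ∈ Ioi (0:ℝ),
    HasDerivWithinAt gumbelInv (-u⁻¹) (Ioi 0) u := fun u hu =>
  (((Real.hasDerivAt_log (ne_of_gt hu)).neg).sub_const _).hasDerivWithinAt

lemma gumbelInv_injOn : InjOn gumbelInv (Ioi 0) := by
  intro a ha b hb h
  have : Real.log a = Real.log b := by unfold gumbelInv at h; linarith
  exact Real.log_injOn_pos ha hb this

lemma gumbelInv_image : gumbelInv '' (Ioi 0) = univ := by
  refine eq_univ_of_forall fun t => ?_
  refine ⟨Real.exp (-(t + Real.eulerMascheroniConstant)), Real.exp_pos _, ?_⟩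
  unfold gumbelInv
  rw [Real.log_exp]; ring

lemma gumbelPDF_inv (u : ℝ) (hu : 0 < u) :
    gumbelPDF (gumbelInv u) = u * Real.exp (-u) := by
  unfold gumbelPDF gumbelInv
  rw [show -(-Real.log u - Real.eulerMascheroniConstant + Real.eulerMascheroniConstant)
      = Real.log u by ring, Real.exp_log hu]

lemma exp_neg_int : IntegrableOn (fun u : ℝ => Real.exp (-u)) (Ioi 0) := by
  simpa using exp_neg_integrableOn_Ioi 0 one_pos

lemma vol_int_iff (g : ℝ → ℝ) :
    Integrable (fun t => gumbelPDF t * g t) volume ↔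
      IntegrableOn (fun u => g (gumbelInv u) * Real.exp (-u)) (Ioi 0) := by
  rw [← integrableOn_univ, ← gumbelInv_image,
    integrableOn_image_iff_integrableOn_abs_deriv_smul measurableSet_Ioi
      gumbelInv_hasDeriv gumbelInv_injOn]
  refine integrableOn_congr_fun (fun u hu => ?_) measurableSet_Ioi
  have hu' : (u:ℝ) ≠ 0 := ne_of_gt hu
  rw [gumbelPDF_inv u hu, smul_eq_mul, abs_neg, abs_inv, abs_of_pos hu]
  field_simp

lemma vol_int_eq (g : ℝ → ℝ) :
    ∫ t, gumbelPDF t * g t = ∫ u in Ioi 0, g (gumbelInv u) * Real.exp (-u) := by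
  rw [← setIntegral_univ, ← gumbelInv_image,
    integral_image_eq_integral_abs_deriv_smul measurableSet_Ioi
      gumbelInv_hasDeriv gumbelInv_injOn]
  refine setIntegral_congr_fun measurableSet_Ioi (fun u hu => ?_)
  have hu' : (u:ℝ) ≠ 0 := ne_of_gt hu
  rw [gumbelPDF_inv u hu, smul_eq_mul, abs_neg, abs_inv, abs_of_pos hu]
  field_simp

lemma gumbel_integral (g : ℝ → ℝ) :
    ∫ t, g t ∂gumbel = ∫ u in Ioi 0, g (gumbelInv u) * Real.exp (-u) := by
  have hm : Measurable fun t => (gumbelPDF t).toNNReal :=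
    continuous_gumbelPDF.measurable.real_toNNReal
  have : gumbel = volume.withDensity fun t => ((gumbelPDF t).toNNReal : ℝ≥0∞) := rfl
  rw [this, integral_withDensity_eq_integral_smul hm, ← vol_int_eq]
  congr 1 with t
  rw [NNReal.smul_def, Real.coe_toNNReal _ (gumbelPDF_nonneg t), smul_eq_mul]

lemma gumbel_integrable_iff (g : ℝ → ℝ) :
    Integrable g gumbel ↔
      IntegrableOn (fun u => g (gumbelInv u) * Real.exp (-u)) (Ioi 0) := by
  have hm : Measurable fun t => (gumbelPDF t).toNNReal :=
    continuous_gumbelPDF.measurable.real_toNNReal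
  have : gumbel = volume.withDensity fun t => ((gumbelPDF t).toNNReal : ℝ≥0∞) := rfl
  rw [this, integrable_withDensity_iff_integrable_smul hm, ← vol_int_iff]
  refine integrable_congr (Eventually.of_forall fun t => ?_)
  show (gumbelPDF t).toNNReal • g t = gumbelPDF t * g t
  rw [NNReal.smul_def, Real.coe_toNNReal _ (gumbelPDF_nonneg t), smul_eq_mul]

instance gumbel_prob : IsProbabilityMeasure gumbel := by
  constructor
  have hint : Integrable gumbelPDF volume := by
    have := (vol_int_iff fun _ => 1).2 (by simpa using exp_neg_int)
    simpa using this
  have : gumbel univ = ∫⁻ t, ENNReal.ofReal (gumbelPDF t) := by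
    unfold gumbel
    rw [withDensity_apply _ MeasurableSet.univ, Measure.restrict_univ]
  rw [this, ← ofReal_integral_eq_lintegral_ofReal hint
    (Eventually.of_forall gumbelPDF_nonneg)]
  have : ∫ t, gumbelPDF t = 1 := by
    have := vol_int_eq fun _ => 1
    simpa [integral_exp_neg_Ioi_zero, integral_exp_Iic_zero] using this
  rw [this]; simp

lemma int_inv_exp : IntegrableOn (fun u : ℝ => gumbelInv u * Real.exp (-u)) (Ioi 0) := by
  have h : IntegrableOn
      (fun u : ℝ => -(Real.log u * Real.exp (-u)) -
        Real.eulerMascheroniConstant * Real.exp (-u)) (Ioi 0) :=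
    log_mul_exp_integrableOn.neg.sub (exp_neg_int.const_mul _)
  refine h.congr_fun (fun u _ => ?_) measurableSet_Ioi
  unfold gumbelInv; ring

lemma gumbel_integrable_id : Integrable (fun t : ℝ => t) gumbel :=
  (gumbel_integrable_iff _).2 int_inv_exp

lemma gumbel_mean : ∫ t, t ∂gumbel = 0 := by
  rw [gumbel_integral fun t => t]
  have h1 : IntegrableOn (fun u : ℝ => -(Real.log u * Real.exp (-u))) (Ioi 0) :=
    log_mul_exp_integrableOn.neg
  have h2 : IntegrableOn
      (fun u : ℝ => Real.eulerMascheroniConstant * Real.exp (-u)) (Ioi 0) :=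
    exp_neg_int.const_mul _
  have heq : ∀ u : ℝ, gumbelInv u * Real.exp (-u)
      = -(Real.log u * Real.exp (-u)) - Real.eulerMascheroniConstant * Real.exp (-u) := by
    intro u; unfold gumbelInv; ring
  rw [setIntegral_congr_fun measurableSet_Ioi (fun u _ => heq u), integral_sub h1 h2,
    integral_neg, integral_log_mul_exp, integral_const_mul, integral_exp_neg_Ioi_zero]
  ring

lemma map_eval_pi_prob {ι : Type*} [Fintype ι] {α : ι → Type*} [∀ i, MeasurableSpace (α i)]
    (ν : ∀ i, Measure (α i)) [∀ i, IsProbabilityMeasure (ν i)] (i : ι) :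
    Measure.map (Function.eval i) (Measure.pi ν) = ν i := by
  classical
  ext s hs
  rw [Measure.map_apply (measurable_pi_apply i) hs, Set.eval_preimage, Measure.pi_pi]
  rw [Fintype.prod_eq_single i (fun j hj => by simp [Function.update_of_ne hj])]
  simp

/-- Properties of the perturb-max uncertainty measure
`U(θ) = E_γ [Σ_{α∈A} γ_α(x^γ_α)]`: it is nonnegative, it vanishes when the
perturb-max model is deterministic (constant argmax), and it is maximized by
constant potentials (which induce the uniform perturb-max model). -/
theorem stmt_10 {n : ℕ} {X : Fin n → Type} [∀ i, Fintype (X i)] [∀ i, Nonempty (X i)]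
    (A : Finset (Finset (Fin n)))
    (hcover : ∀ i : Fin n, ∃ α ∈ A, i ∈ α)
    (μ : Measure (∀ α : A, ((i : (α : Finset (Fin n))) → X i) → ℝ))
    (hμ : μ = Measure.pi fun α : A =>
      Measure.pi fun _ : (i : (α : Finset (Fin n))) → X i => gumbel)
    (U : ((∀ i, X i) → ℝ) →
      (((∀ α : A, ((i : (α : Finset (Fin n))) → X i) → ℝ) → ∀ i, X i)) → ℝ)
    (hU : ∀ θ xstar, U θ xstar = ∫ γ, (∑ α : A, γ α (fun i => xstar γ i)) ∂μ) :
    (∀ (θ : (∀ i, X i) → ℝ) xstar,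
      (∀ γ, ∀ x : ∀ i, X i,
        θ x + ∑ α : A, γ α (fun i => x i)
          ≤ θ (xstar γ) + ∑ α : A, γ α (fun i => xstar γ i)) →
      0 ≤ U θ xstar) ∧
    (∀ (θ : (∀ i, X i) → ℝ) xstar (xhat : ∀ i, X i),
      (∀ γ, xstar γ = xhat) → U θ xstar = 0) ∧
    (∀ (c : ℝ) (xstarU : (∀ α : A, ((i : (α : Finset (Fin n))) → X i) → ℝ) → ∀ i, X i),
      (∀ γ : ∀ α : A, ((i : (α : Finset (Fin n))) → X i) → ℝ, ∀ x : ∀ i, X i,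
        (∑ α : A, γ α (fun i => x i)) ≤ ∑ α : A, γ α (fun i => xstarU γ i)) →
      ∀ (θ : (∀ i, X i) → ℝ) xstar,
        (∀ γ, ∀ x : ∀ i, X i,
          θ x + ∑ α : A, γ α (fun i => x i)
            ≤ θ (xstar γ) + ∑ α : A, γ α (fun i => xstar γ i)) →
        U θ xstar ≤ U (fun _ => c) xstarU) := by
  classical
  subst hμ
  set μ : Measure (∀ α : A, ((i : (α : Finset (Fin n))) → X i) → ℝ) :=
    Measure.pi fun α : A =>
      Measure.pi fun _ : (i : (α : Finset (Fin n))) → X i => gumbel with hμ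
  -- coordinate functions
  have coord_meas : ∀ (α₀ : A) (x₀ : (i : (α₀ : Finset (Fin n))) → X i),
      Measurable fun γ : ∀ α : A, ((i : (α : Finset (Fin n))) → X i) → ℝ => γ α₀ x₀ :=
    fun α₀ x₀ => (measurable_pi_apply x₀).comp (measurable_pi_apply α₀)
  have coord_map : ∀ (α₀ : A) (x₀ : (i : (α₀ : Finset (Fin n))) → X i),
      Measure.map (fun γ : ∀ α : A, ((i : (α : Finset (Fin n))) → X i) → ℝ => γ α₀ x₀) μ
        = gumbel := by
    intro α₀ x₀
    have : (fun γ : ∀ α : A, ((i : (α : Finset (Fin n))) → X i) → ℝ => γ α₀ x₀)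
        = (Function.eval x₀ : (((i : (α₀ : Finset (Fin n))) → X i) → ℝ) → ℝ) ∘
          (Function.eval α₀ : (∀ α : A, ((i : (α : Finset (Fin n))) → X i) → ℝ) →
            (((i : (α₀ : Finset (Fin n))) → X i) → ℝ)) := rfl
    rw [this, ← Measure.map_map (measurable_pi_apply x₀) (measurable_pi_apply α₀), hμ,
      map_eval_pi_prob, map_eval_pi_prob]
  have coord_int : ∀ (α₀ : A) (x₀ : (i : (α₀ : Finset (Fin n))) → X i),
      Integrable (fun γ : ∀ α : A, ((i : (α : Finset (Fin n))) → X i) → ℝ => γ α₀ x₀) μ := by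
    intro α₀ x₀
    have h := (integrable_map_measure (f := fun γ : ∀ α : A,
        ((i : (α : Finset (Fin n))) → X i) → ℝ => γ α₀ x₀) (g := fun t : ℝ => t)
      (by rw [coord_map]; exact gumbel_integrable_id.1) (coord_meas α₀ x₀).aemeasurable).1
    rw [coord_map] at h
    exact h gumbel_integrable_id
  have coord_integral : ∀ (α₀ : A) (x₀ : (i : (α₀ : Finset (Fin n))) → X i),
      ∫ γ, γ α₀ x₀ ∂μ = 0 := by
    intro α₀ x₀
    have h := integral_map (μ := μ)
      (φ := fun γ : ∀ α : A, ((i : (α : Finset (Fin n))) → X i) → ℝ => γ α₀ x₀)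
      (f := fun t : ℝ => t) (coord_meas α₀ x₀).aemeasurable
      (by rw [coord_map]; exact gumbel_integrable_id.1)
    rw [coord_map, gumbel_mean] at h
    exact h.symm
  -- the functions h x
  set h : (∀ i, X i) → (∀ α : A, ((i : (α : Finset (Fin n))) → X i) → ℝ) → ℝ :=
    fun x γ => ∑ α : A, γ α (fun i => x i) with hh
  have h_int : ∀ x, Integrable (h x) μ :=
    fun x => integrable_finset_sum _ (fun α _ => coord_int α _)
  have h_integral : ∀ x, ∫ γ, h x γ ∂μ = 0 := by
    intro x
    rw [hh]
    rw [integral_finset_sum _ (fun α _ => coord_int α _)]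
    simp [coord_integral]
  refine ⟨?_, ?_, ?_⟩
  · -- nonnegativity
    intro θ xstar hmax
    obtain ⟨x₀, hx₀⟩ := Finite.exists_max θ
    have hle : ∀ γ, h x₀ γ ≤ ∑ α : A, γ α (fun i => xstar γ i) := by
      intro γ
      have h1 := hmax γ x₀
      have h2 := hx₀ (xstar γ)
      simp only [hh]
      linarith
    rw [hU]
    by_cases hf : Integrable (fun γ => ∑ α : A, γ α (fun i => xstar γ i)) μ
    · calc (0:ℝ) = ∫ γ, h x₀ γ ∂μ := (h_integral x₀).symm
        _ ≤ _ := integral_mono (h_int x₀) hf hle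
    · rw [integral_undef hf]
  · -- deterministic case
    intro θ xstar xhat hconst
    rw [hU]
    have : (fun γ : ∀ α : A, ((i : (α : Finset (Fin n))) → X i) → ℝ =>
        ∑ α : A, γ α (fun i => xstar γ i)) = h xhat := by
      funext γ; rw [hh]; simp [hconst γ]
    rw [this, h_integral]
  · -- maximality of the uniform model
    intro c xstarU hU1 θ xstar hmax
    have hg_eq : ∀ γ, (∑ α : A, γ α (fun i => xstarU γ i))
        = Finset.univ.sup' Finset.univ_nonempty (fun x : ∀ i, X i => h x γ) := by
      intro γ
      refine le_antisymm ?_ ?_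
      · exact Finset.le_sup' (f := fun x : ∀ i, X i => h x γ) (Finset.mem_univ (xstarU γ))
      · exact Finset.sup'_le _ _ fun x _ => hU1 γ x
    have hg_meas : Measurable (fun γ : ∀ α : A, ((i : (α : Finset (Fin n))) → X i) → ℝ =>
        ∑ α : A, γ α (fun i => xstarU γ i)) := by
      rw [funext hg_eq]
      have := Finset.measurable_sup' (f := fun (x : ∀ i, X i) γ => h x γ)
        Finset.univ_nonempty
        (fun x _ => Finset.measurable_sum _ (fun α _ => coord_meas α _))
      have heq2 : (Finset.univ.sup' Finset.univ_nonempty fun (x : ∀ i, X i) γ => h x γ)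
          = fun γ => Finset.univ.sup' Finset.univ_nonempty fun x => h x γ :=
        funext fun γ => Finset.sup'_apply _ _ _
      rw [heq2] at this
      exact this
    have hg_int : Integrable (fun γ : ∀ α : A, ((i : (α : Finset (Fin n))) → X i) → ℝ =>
        ∑ α : A, γ α (fun i => xstarU γ i)) μ := by
      refine Integrable.mono' (g := fun γ => ∑ x : ∀ i, X i, |h x γ|)
        (integrable_finset_sum _ (fun x _ => (h_int x).abs))
        hg_meas.aestronglyMeasurable
        (Eventually.of_forall fun γ => ?_)
      calc ‖∑ α : A, γ α (fun i => xstarU γ i)‖ = |h (xstarU γ) γ| := rfl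
        _ ≤ ∑ x : ∀ i, X i, |h x γ| :=
          Finset.single_le_sum (f := fun x => |h x γ|)
            (fun x _ => abs_nonneg _) (Finset.mem_univ _)
    rw [hU, hU]
    by_cases hf : Integrable (fun γ => ∑ α : A, γ α (fun i => xstar γ i)) μ
    · exact integral_mono hf hg_int (fun γ => hU1 γ (xstar γ))
    · rw [integral_undef hf]
      obtain ⟨x₀⟩ : Nonempty (∀ i, X i) := inferInstance
      calc (0:ℝ) = ∫ γ, h x₀ γ ∂μ := (h_integral x₀).symm
        _ ≤ _ := integral_mono (h_int x₀) hg_int (fun γ => hU1 γ x₀)
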